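/- arXiv:2103.16934 — 5 statements merged into one kernel-verified Lean document; each statement's English description precedes it below -/
import Mathlib

section
/- Let F: ℝⁿ ⇉ ℝⁿ be a set-valued mapping with convex graph, (u,v) ∈ gph F, and v* ∈ ℝⁿ with v ∈ F_A(u; v*), i.e., ⟨v, v*⟩ = H_F(u, v*). Then u* ∈ ℝⁿ satisfies (u*, −v*) ∈ K_F*(u,v) (the dual cone of the tangent cone of gph F at (u,v)) if and only if H_F(ũ, v*) − H_F(u, v*) ≤ ⟨u*, ũ − u⟩ for all ũ ∈ ℝⁿ. -/
open RealInnerProductSpace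

/-- Hamiltonian of a set-valued mapping, with values in the extended reals. -/
noncomputable def HamE {n : ℕ} (F : EuclideanSpace ℝ (Fin n) → Set (EuclideanSpace ℝ (Fin n)))
    (u vs : EuclideanSpace ℝ (Fin n)) : EReal :=
  sSup ((fun v => ((⟪v, vs⟫ : ℝ) : EReal)) '' F u)

/-- `coneOf A` = positive scalar multiples of elements of `A`. -/
def coneOf {X : Type*} [SMul ℝ X] (A : Set X) : Set X :=
  {z | ∃ μ : ℝ, 0 < μ ∧ ∃ a ∈ A, z = μ • a}

/-- For a convex set-valued mapping `F` and `v ∈ F_A(u; v*)`, a vector `u*` satisfies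
`(u*, −v*) ∈ K_F*(u,v)` iff `H_F(ũ, v*) − H_F(u, v*) ≤ ⟨u*, ũ − u⟩` for all `ũ`. -/
theorem stmt2 {n : ℕ} (F : EuclideanSpace ℝ (Fin n) → Set (EuclideanSpace ℝ (Fin n)))
    (hF : Convex ℝ {p : EuclideanSpace ℝ (Fin n) × EuclideanSpace ℝ (Fin n) | p.2 ∈ F p.1})
    (u v vs us : EuclideanSpace ℝ (Fin n)) (hv : v ∈ F u)
    (hargmax : ((⟪v, vs⟫ : ℝ) : EReal) = HamE F u vs) :
    (∀ w ∈ coneOf ((fun p => p - (u, v)) ''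
        {p : EuclideanSpace ℝ (Fin n) × EuclideanSpace ℝ (Fin n) | p.2 ∈ F p.1}),
      0 ≤ (⟪w.1, us⟫ : ℝ) + ⟪w.2, -vs⟫) ↔
    (∀ ut : EuclideanSpace ℝ (Fin n),
      HamE F ut vs ≤ HamE F u vs + ((⟪us, ut - u⟫ : ℝ) : EReal)) := by
  constructor
  · intro h ut
    rw [← hargmax, ← EReal.coe_add]
    apply sSup_le
    rintro x ⟨v', hv', rfl⟩
    have hw := h ((ut, v') - (u, v))
      ⟨1, one_pos, (ut, v') - (u, v), ⟨(ut, v'), hv', rfl⟩, (one_smul _ _).symm⟩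
    simp only [Prod.fst_sub, Prod.snd_sub] at hw
    rw [inner_sub_left, inner_sub_left, inner_neg_right, inner_neg_right] at hw
    rw [EReal.coe_le_coe_iff]
    have hc : (inner ℝ us (ut - u) : ℝ) = (inner ℝ (ut - u) us : ℝ) := real_inner_comm _ _
    rw [hc, inner_sub_left]
    linarith
  · rintro h w ⟨μ, hμ, a, ⟨p, hp, rfl⟩, rfl⟩
    have key : ((inner ℝ p.2 (vs) : ℝ) : EReal) ≤ (((inner ℝ v (vs) : ℝ) + (inner ℝ us (p.1 - u) : ℝ) : ℝ) : EReal) := by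
      calc ((inner ℝ p.2 (vs) : ℝ) : EReal) ≤ HamE F p.1 vs := le_sSup ⟨p.2, hp, rfl⟩
        _ ≤ HamE F u vs + (((inner ℝ us (p.1 - u) : ℝ) : ℝ) : EReal) := h p.1
        _ = _ := by rw [← hargmax, ← EReal.coe_add]
    rw [EReal.coe_le_coe_iff] at key
    simp only [Prod.smul_fst, Prod.smul_snd, Prod.fst_sub, Prod.snd_sub]
    rw [real_inner_smul_left, real_inner_smul_left, inner_sub_left, inner_sub_left,
      inner_neg_right, inner_neg_right]
    have hc : (inner ℝ us (p.1 - u) : ℝ) = (inner ℝ (p.1 - u) us : ℝ) := real_inner_comm _ _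
    rw [inner_sub_left] at hc
    nlinarith
end

section
/- Let F: ℝⁿ ⇉ ℝⁿ have convex graph and let (u,v) ∈ gph F with v ∈ F_A(u; v*). Then the locally adjoint mapping satisfies F*(v*; (u,v)) = ∂H_F(u, v*), where ∂ denotes the superdifferential of the concave function u ↦ H_F(u, v*), i.e., ∂H_F(u, v*) = {u* : H_F(ũ, v*) − H_F(u, v*) ≤ ⟨u*, ũ − u⟩ ∀ũ}. -/
open RealInnerProductSpace

/-- For a convex set-valued mapping `F` with `v ∈ F_A(u; v*)`, the locally adjoint mapping
`F*(v*; (u,v)) = {u* : (u*, −v*) ∈ K_F*(u,v)}` coincides with the superdifferential of the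
concave function `u ↦ H_F(u, v*)` at `u`. -/
theorem stmt3 {n : ℕ} (F : EuclideanSpace ℝ (Fin n) → Set (EuclideanSpace ℝ (Fin n)))
    (hF : Convex ℝ {p : EuclideanSpace ℝ (Fin n) × EuclideanSpace ℝ (Fin n) | p.2 ∈ F p.1})
    (u v vs : EuclideanSpace ℝ (Fin n)) (hv : v ∈ F u)
    (hargmax : ((⟪v, vs⟫ : ℝ) : EReal) = HamE F u vs) :
    {us : EuclideanSpace ℝ (Fin n) |
        ∀ w ∈ coneOf ((fun p => p - (u, v)) ''
          {p : EuclideanSpace ℝ (Fin n) × EuclideanSpace ℝ (Fin n) | p.2 ∈ F p.1}),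
        0 ≤ (⟪w.1, us⟫ : ℝ) + ⟪w.2, -vs⟫} =
      {us : EuclideanSpace ℝ (Fin n) | ∀ ut : EuclideanSpace ℝ (Fin n),
        HamE F ut vs ≤ HamE F u vs + ((⟪us, ut - u⟫ : ℝ) : EReal)} := by
  ext us
  simp only [Set.mem_setOf_eq]
  constructor
  · intro h ut
    rw [← hargmax, ← EReal.coe_add]
    apply sSup_le
    rintro x ⟨v', hv', rfl⟩
    rw [EReal.coe_le_coe_iff]
    have key := h ((ut, v') - (u, v)) ⟨1, one_pos, (ut, v') - (u, v),
      ⟨(ut, v'), hv', rfl⟩, (one_smul _ _).symm⟩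
    simp only [Prod.fst_sub, Prod.snd_sub, inner_sub_left, inner_neg_right] at key
    have e : (⟪ut - u, us⟫ : ℝ) = ⟪ut, us⟫ - ⟪u, us⟫ := inner_sub_left _ _ _
    linarith [key, real_inner_comm us (ut - u), e]
  · intro h w hw
    obtain ⟨μ, hμ, a, ⟨p, hp, rfl⟩, rfl⟩ := hw
    have h1 : ((⟪p.2, vs⟫ : ℝ) : EReal) ≤ HamE F p.1 vs :=
      le_sSup ⟨p.2, hp, rfl⟩
    have h2 := (h1.trans (h p.1)).trans_eq (by rw [← hargmax, ← EReal.coe_add])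
    rw [EReal.coe_le_coe_iff] at h2
    have hkey : (0:ℝ) ≤ ⟪p.1 - u, us⟫ + ⟪p.2 - v, -vs⟫ := by
      rw [inner_sub_left, inner_neg_right, inner_sub_left]
      have hcomm := real_inner_comm us (p.1 - u)
      rw [inner_sub_left] at hcomm
      linarith [h2, hcomm]
    have : (μ • (p - (u, v))).1 = μ • (p.1 - u) := rfl
    rw [this, show (μ • (p - (u, v))).2 = μ • (p.2 - v) from rfl,
      real_inner_smul_left, real_inner_smul_left, ← mul_add]
    exact mul_nonneg hμ.le hkey
end

section
/- Let A be an n×n real matrix, B an n×r real matrix, U ⊆ ℝʳ a convex closed set, and define F(u) = {Au + Bw : w ∈ U}. Fix (u, v) ∈ gph F with v = Au + Bw̃, w̃ ∈ U, and v* ∈ ℝⁿ with v ∈ F_A(u; v*). Then F*(v*; (u,v)) = {Aᵀv*} if −Bᵀv* ∈ [cone(U − w̃)]*, and F*(v*; (u,v)) = ∅ otherwise, where [cone(U − w̃)]* = {p ∈ ℝʳ : ⟨w − w̃, p⟩ ≥ 0 ∀ w ∈ U}. -/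
open Matrix

/-- Hamiltonian for set-valued mappings on `Fin n → ℝ` using the dot product. -/
noncomputable def HamD {n : ℕ} (F : (Fin n → ℝ) → Set (Fin n → ℝ))
    (u vs : Fin n → ℝ) : EReal :=
  sSup ((fun v => ((v ⬝ᵥ vs : ℝ) : EReal)) '' F u)

lemma dot_transpose_mulVec {m k : ℕ} (M : Matrix (Fin m) (Fin k) ℝ)
    (x : Fin k → ℝ) (y : Fin m → ℝ) : x ⬝ᵥ (Mᵀ.mulVec y) = (M.mulVec x) ⬝ᵥ y := by
  rw [Matrix.mulVec_transpose, dotProduct_comm x, ← Matrix.dotProduct_mulVec,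
    dotProduct_comm]

/-- LAM formula (36) for the linear mapping `F(u) = Au + BU`. -/
theorem stmt10 {n r : ℕ} (A : Matrix (Fin n) (Fin n) ℝ) (B : Matrix (Fin n) (Fin r) ℝ)
    (U : Set (Fin r → ℝ)) (hUconv : Convex ℝ U) (hUcl : IsClosed U)
    (F : (Fin n → ℝ) → Set (Fin n → ℝ))
    (hFdef : ∀ u, F u = {v | ∃ w ∈ U, v = A.mulVec u + B.mulVec w})
    (u v : Fin n → ℝ) (wt : Fin r → ℝ) (hwt : wt ∈ U) (hvdef : v = A.mulVec u + B.mulVec wt)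
    (vs : Fin n → ℝ) (hargmax : ((v ⬝ᵥ vs : ℝ) : EReal) = HamD F u vs) :
    ((∀ w ∈ U, 0 ≤ (w - wt) ⬝ᵥ (-(Bᵀ.mulVec vs)) ) →
      {us : Fin n → ℝ | ∀ ut : Fin n → ℝ,
        HamD F ut vs ≤ HamD F u vs + ((us ⬝ᵥ (ut - u) : ℝ) : EReal)} = {Aᵀ.mulVec vs}) ∧
    ((¬ ∀ w ∈ U, 0 ≤ (w - wt) ⬝ᵥ (-(Bᵀ.mulVec vs))) →
      {us : Fin n → ℝ | ∀ ut : Fin n → ℝ,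
        HamD F ut vs ≤ HamD F u vs + ((us ⬝ᵥ (ut - u) : ℝ) : EReal)} = ∅) := by
  -- key: wt maximizes ⟨Bw, vs⟩ over U
  have hmax : ∀ w ∈ U, (B.mulVec w) ⬝ᵥ vs ≤ (B.mulVec wt) ⬝ᵥ vs := by
    intro w hw
    have hmem : (((A.mulVec u + B.mulVec w) ⬝ᵥ vs : ℝ) : EReal) ∈
        ((fun v => ((v ⬝ᵥ vs : ℝ) : EReal)) '' F u) := by
      refine ⟨A.mulVec u + B.mulVec w, ?_, rfl⟩
      rw [hFdef]; exact ⟨w, hw, rfl⟩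
    have hle : (((A.mulVec u + B.mulVec w) ⬝ᵥ vs : ℝ) : EReal) ≤ ((v ⬝ᵥ vs : ℝ) : EReal) := by
      rw [hargmax]; exact le_sSup hmem
    have : (A.mulVec u + B.mulVec w) ⬝ᵥ vs ≤ v ⬝ᵥ vs := EReal.coe_le_coe_iff.mp hle
    rw [hvdef, add_dotProduct, add_dotProduct] at this
    linarith
  -- HamD is computed explicitly
  have hHam : ∀ ut : Fin n → ℝ,
      HamD F ut vs = (((A.mulVec ut + B.mulVec wt) ⬝ᵥ vs : ℝ) : EReal) := by
    intro ut
    unfold HamD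
    apply le_antisymm
    · apply sSup_le
      rintro x ⟨y, hy, rfl⟩
      rw [hFdef] at hy
      obtain ⟨w, hw, rfl⟩ := hy
      rw [EReal.coe_le_coe_iff, add_dotProduct, add_dotProduct]
      exact add_le_add_right (hmax w hw) _
    · apply le_sSup
      refine ⟨A.mulVec ut + B.mulVec wt, ?_, rfl⟩
      rw [hFdef]; exact ⟨wt, hwt, rfl⟩
  -- condition holds
  have hcond : ∀ w ∈ U, 0 ≤ (w - wt) ⬝ᵥ (-(Bᵀ.mulVec vs)) := by
    intro w hw
    have h1 : (w - wt) ⬝ᵥ (Bᵀ.mulVec vs) = (B.mulVec (w - wt)) ⬝ᵥ vs :=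
      dot_transpose_mulVec B (w - wt) vs
    have h2 : B.mulVec (w - wt) = B.mulVec w - B.mulVec wt := by
      simp [mulVec_sub]
    rw [dotProduct_neg, h1, h2, sub_dotProduct]
    have := hmax w hw
    linarith
  constructor
  · intro _
    ext us
    simp only [Set.mem_setOf_eq, Set.mem_singleton_iff]
    have hiff : (∀ ut : Fin n → ℝ,
        HamD F ut vs ≤ HamD F u vs + ((us ⬝ᵥ (ut - u) : ℝ) : EReal)) ↔
        (∀ ut : Fin n → ℝ, (A.mulVec ut + B.mulVec wt) ⬝ᵥ vs ≤
          (A.mulVec u + B.mulVec wt) ⬝ᵥ vs + us ⬝ᵥ (ut - u)) := by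
      constructor <;> intro h ut <;> have h' := h ut
      · rw [hHam ut, hHam u, ← EReal.coe_add, EReal.coe_le_coe_iff] at h'
        exact h'
      · rw [hHam ut, hHam u, ← EReal.coe_add, EReal.coe_le_coe_iff]
        exact h'
    rw [hiff]
    constructor
    · intro h
      have key : ∀ x : Fin n → ℝ, (A.mulVec x) ⬝ᵥ vs ≤ us ⬝ᵥ x := by
        intro x
        have h' := h (u + x)
        rw [mulVec_add] at h'
        simp only [add_dotProduct] at h'
        have hx : (u + x) - u = x := by abel
        rw [hx] at h'
        linarith
      have keyeq : ∀ x : Fin n → ℝ, us ⬝ᵥ x = (A.mulVec x) ⬝ᵥ vs := by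
        intro x
        have h1 := key x
        have h2 := key (-x)
        rw [mulVec_neg, neg_dotProduct, dotProduct_neg] at h2
        linarith
      have : ∀ x : Fin n → ℝ, (us - Aᵀ.mulVec vs) ⬝ᵥ x = 0 := by
        intro x
        rw [sub_dotProduct, keyeq x]
        have : (Aᵀ.mulVec vs) ⬝ᵥ x = (A.mulVec x) ⬝ᵥ vs := by
          rw [dotProduct_comm, dot_transpose_mulVec]
        rw [this, sub_self]
      have hz := this (us - Aᵀ.mulVec vs)
      have := (dotProduct_self_eq_zero (v := us - Aᵀ.mulVec vs)).mp hz
      have := sub_eq_zero.mp this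
      exact this
    · rintro rfl ut
      have : (Aᵀ.mulVec vs) ⬝ᵥ (ut - u) = (A.mulVec (ut - u)) ⬝ᵥ vs := by
        rw [dotProduct_comm, dot_transpose_mulVec]
      rw [this, mulVec_sub]
      simp only [add_dotProduct, sub_dotProduct]
      linarith
  · intro h
    exact absurd hcond h
end

section
/- Let A, B be s×n real matrices, d ∈ ℝˢ, and define the polyhedral set-valued mapping F(u) = {v ∈ ℝⁿ : Au − Bv ≤ d} (componentwise inequality). Let (ũ, ṽ) ∈ gph F and v* ∈ ℝⁿ with ṽ ∈ F_A(ũ; v*). If q ∈ ℝˢ satisfies q ≥ 0, v* = −Bᵀq, and ⟨Aũ − Bṽ − d, q⟩ = 0, then −Aᵀq ∈ F*(v*; (ũ, ṽ)), i.e., H_F(u, v*) − H_F(ũ, v*) ≤ ⟨−Aᵀq, u − ũ⟩ for all u ∈ ℝⁿ. -/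
open Matrix

/-- LAM of the polyhedral mapping `F(u) = {v : Au − Bv ≤ d}`: if `q ≥ 0`, `v* = −Bᵀq` and
`⟨Aũ − Bṽ − d, q⟩ = 0`, then `−Aᵀq ∈ F*(v*; (ũ, ṽ))`. -/
theorem stmt13 {s n : ℕ} (A B : Matrix (Fin s) (Fin n) ℝ) (d : Fin s → ℝ)
    (F : (Fin n → ℝ) → Set (Fin n → ℝ))
    (hFdef : ∀ u, F u = {v | A.mulVec u - B.mulVec v ≤ d})
    (ut vt : Fin n → ℝ) (hvt : vt ∈ F ut) (vs : Fin n → ℝ)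
    (hargmax : ((vt ⬝ᵥ vs : ℝ) : EReal) = HamD F ut vs)
    (q : Fin s → ℝ) (hq : 0 ≤ q) (hvs : vs = -(Bᵀ.mulVec q))
    (hcompl : (A.mulVec ut - B.mulVec vt - d) ⬝ᵥ q = 0) :
    ∀ u : Fin n → ℝ,
      HamD F u vs ≤ HamD F ut vs + (((-(Aᵀ.mulVec q)) ⬝ᵥ (u - ut) : ℝ) : EReal) := by
  intro u
  have hB : ∀ w : Fin n → ℝ, w ⬝ᵥ (Bᵀ.mulVec q) = B.mulVec w ⬝ᵥ q := by
    intro w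
    rw [Matrix.dotProduct_mulVec, Matrix.vecMul_transpose]
  have hA : (Aᵀ.mulVec q) ⬝ᵥ (u - ut) = A.mulVec u ⬝ᵥ q - A.mulVec ut ⬝ᵥ q := by
    rw [dotProduct_comm, Matrix.dotProduct_mulVec, Matrix.vecMul_transpose,
      Matrix.mulVec_sub, sub_dotProduct]
  have hcompl' : A.mulVec ut ⬝ᵥ q - B.mulVec vt ⬝ᵥ q - d ⬝ᵥ q = 0 := by
    rw [← sub_dotProduct, ← sub_dotProduct]; exact hcompl
  have key : ∀ v ∈ F u, (v ⬝ᵥ vs : ℝ) ≤ vt ⬝ᵥ vs + (-(Aᵀ.mulVec q)) ⬝ᵥ (u - ut) := by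
    intro v hv
    rw [hFdef] at hv
    have h1 : (A.mulVec u - B.mulVec v - d) ⬝ᵥ q ≤ 0 := by
      apply Finset.sum_nonpos
      intro i _
      have h2 : (A.mulVec u - B.mulVec v - d) i ≤ 0 := by
        have := hv i
        simp only [Pi.sub_apply] at this ⊢
        linarith
      exact mul_nonpos_iff.mpr (Or.inr ⟨h2, hq i⟩)
    rw [sub_dotProduct, sub_dotProduct] at h1
    have hvv : v ⬝ᵥ vs = -(B.mulVec v ⬝ᵥ q) := by
      rw [hvs, dotProduct_neg, hB]
    have hvtv : vt ⬝ᵥ vs = -(B.mulVec vt ⬝ᵥ q) := by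
      rw [hvs, dotProduct_neg, hB]
    rw [hvv, hvtv, neg_dotProduct, hA]
    linarith
  show HamD F u vs ≤ _
  rw [← hargmax, ← EReal.coe_add]
  apply sSup_le
  rintro x ⟨v, hv, rfl⟩
  exact EReal.coe_le_coe_iff.mpr (key v hv)
end

section
/- Sufficiency theorem for the parabolic differential inclusion problem (Theorem 5.1, pointwise core): Let g(·): ℝⁿ → ℝ be convex, F: ℝⁿ ⇉ ℝⁿ have convex graph, and let ũ, v be such that ṽ := v ∈ F(ũ) with ṽ ∈ F_A(ũ; p) for some p ∈ ℝⁿ, and suppose q ∈ F*(p; (ũ, ṽ)) − ∂g(ũ) in the sense that q + s ∈ F*(p; (ũ, ṽ)) for some s ∈ ∂g(ũ). Then for every (u, w) ∈ gph F: g(u) − g(ũ) ≥ ⟨w − ṽ, p⟩ − ⟨q, u − ũ⟩. -/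
open RealInnerProductSpace

/-- Pointwise core of the sufficiency Theorem 5.1: if `ṽ ∈ F_A(ũ; p)`, `s ∈ ∂g(ũ)` and
`q + s ∈ F*(p; (ũ, ṽ))`, then `g(u) − g(ũ) ≥ ⟨w − ṽ, p⟩ − ⟨q, u − ũ⟩` on `gph F`. -/
theorem stmt17 {n : ℕ} (g : EuclideanSpace ℝ (Fin n) → ℝ) (hg : ConvexOn ℝ Set.univ g)
    (F : EuclideanSpace ℝ (Fin n) → Set (EuclideanSpace ℝ (Fin n)))
    (hF : Convex ℝ {z : EuclideanSpace ℝ (Fin n) × EuclideanSpace ℝ (Fin n) | z.2 ∈ F z.1})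
    (ut vt p q s : EuclideanSpace ℝ (Fin n)) (hvt : vt ∈ F ut)
    (hargmax : ((⟪vt, p⟫ : ℝ) : EReal) = HamE F ut p)
    (hs : ∀ u : EuclideanSpace ℝ (Fin n), (⟪s, u - ut⟫ : ℝ) ≤ g u - g ut)
    (hqs : ∀ u : EuclideanSpace ℝ (Fin n),
      HamE F u p ≤ HamE F ut p + ((⟪q + s, u - ut⟫ : ℝ) : EReal)) :
    ∀ u w : EuclideanSpace ℝ (Fin n), w ∈ F u →
      (⟪w - vt, p⟫ : ℝ) - ⟪q, u - ut⟫ ≤ g u - g ut := by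
  intro u w hw
  have h1 : ((⟪w, p⟫ : ℝ) : EReal) ≤ HamE F u p :=
    le_sSup ⟨w, hw, rfl⟩
  have h2 : ((⟪w, p⟫ : ℝ) : EReal) ≤ ((⟪vt, p⟫ + ⟪q + s, u - ut⟫ : ℝ) : EReal) := by
    push_cast
    calc ((⟪w, p⟫ : ℝ) : EReal) ≤ HamE F u p := h1
    _ ≤ HamE F ut p + ((⟪q + s, u - ut⟫ : ℝ) : EReal) := hqs u
    _ = ((⟪vt, p⟫ : ℝ) : EReal) + ((⟪q + s, u - ut⟫ : ℝ) : EReal) := by rw [hargmax]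
  have h3 : (⟪w, p⟫ : ℝ) ≤ ⟪vt, p⟫ + ⟪q + s, u - ut⟫ := EReal.coe_le_coe_iff.mp h2
  have h4 := hs u
  have hdecomp : (⟪q + s, u - ut⟫ : ℝ) = ⟪q, u - ut⟫ + ⟪s, u - ut⟫ := inner_add_left _ _ _
  have hsub : (⟪w - vt, p⟫ : ℝ) = ⟪w, p⟫ - ⟪vt, p⟫ := inner_sub_left _ _ _
  linarith
end
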